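/- arXiv:1708.07057 — 3 statements merged into one kernel-verified Lean document; each statement's English description precedes it below -/
import Mathlib

section
/- For a real number r > 0 and nonnegative integer k, define δ(r,k) = max{N ≥ 0 : r·v(k+1) + N ≤ r·v(k+N+1)}, where v denotes the p-adic valuation. If p > r + 1 (with r a positive integer), then δ(r,k) ≤ r·⌊k/(p−r−1)⌋. -/
lemma pow_ge_lin (p m : ℕ) (hp : 1 ≤ p) : (p - 1) * m + 1 ≤ p ^ m := by
  induction m with
  | zero => simp
  | succ n ih =>
    have : p ^ n * 1 ≤ p ^ n * p := Nat.mul_le_mul_left _ hp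
    have h1 : 1 ≤ p ^ n := Nat.one_le_pow _ _ hp
    calc (p - 1) * (n + 1) + 1 = ((p - 1) * n + 1) + (p - 1) := by ring
    _ ≤ p ^ n + (p - 1) * p ^ n := by
        exact Nat.add_le_add ih (Nat.le_mul_of_pos_right _ h1)
    _ = (1 + (p - 1)) * p ^ n := by ring
    _ = p * p ^ n := by
        have h : 1 + (p - 1) = p := by omega
        rw [h]
    _ = p ^ (n + 1) := by ring

/-- Fix a prime `p` and let `v = padicValNat p`. For a positive integer `r`
with `p > r + 1` and a nonnegative integer `k`, let `δ` be the greatest `N ≥ 0` with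
`r·v(k+1) + N ≤ r·v(k+N+1)`. Then `δ ≤ r·⌊k/(p−r−1)⌋`. -/
theorem stmt0 (p r k δ : ℕ) (hp : p.Prime) (hr : 0 < r) (hpr : r + 1 < p)
    (hδ : r * padicValNat p (k + 1) + δ ≤ r * padicValNat p (k + δ + 1))
    (hδmax : ∀ N : ℕ, r * padicValNat p (k + 1) + N ≤ r * padicValNat p (k + N + 1) → N ≤ δ) :
    δ ≤ r * (k / (p - r - 1)) := by
  set a := padicValNat p (k + 1) with ha
  set b := padicValNat p (k + δ + 1) with hb
  by_cases hab : b ≤ a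
  · have : r * b ≤ r * a := Nat.mul_le_mul_left _ hab
    have : δ = 0 := by omega
    simp [this]
  · push_neg at hab
    set m := b - a with hm
    have hδm : δ ≤ r * m := by
      have : r * b = r * a + r * m := by
        have : b = a + m := by omega
        rw [this]; ring
      omega
    have hdvd : p ^ b ∣ k + δ + 1 := pow_padicValNat_dvd
    have hpb : p ^ b ≤ k + δ + 1 := Nat.le_of_dvd (by omega) hdvd
    have hlin : (p - 1) * m + 1 ≤ p ^ m := pow_ge_lin p m hp.one_le
    have hpm : p ^ m ≤ p ^ b := Nat.pow_le_pow_right hp.one_le (by omega)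
    have hkey : m * (p - r - 1) ≤ k := by
      rw [Nat.mul_comm]
      have h1 : (p - 1) * m + 1 ≤ k + δ + 1 := le_trans hlin (le_trans hpm hpb)
      have h2 : (p - 1) * m ≤ k + r * m := by omega
      have : (p - 1) * m = (p - r - 1) * m + r * m := by
        have : p - 1 = (p - r - 1) + r := by omega
        rw [this]; ring
      omega
    have : m ≤ k / (p - r - 1) :=
      (Nat.le_div_iff_mul_le (by omega)).mpr hkey
    calc δ ≤ r * m := hδm
    _ ≤ r * (k / (p - r - 1)) := Nat.mul_le_mul_left _ this
end

section
/- For a prime p, a positive integer r with p > r + 1, and nonnegative integer k, with δ(r,k) as defined, one has k + δ(r,k) ≤ μ_r · k where μ_r = (p−1)/(p−r−1). -/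
lemma aux_pow_lb (p : ℕ) (hp : 2 ≤ p) : ∀ m : ℕ, m * p + 1 ≤ p ^ m + m := by
  intro m
  induction m with
  | zero => simp
  | succ n ih =>
    have h1 : (n * p + 1) * p ≤ (p ^ n + n) * p :=
      Nat.mul_le_mul_right p ih
    have hpn : 1 ≤ p ^ n := Nat.one_le_pow _ _ (by omega)
    have hsq : n * (2 * p) ≤ n * (p * p + 1) := by
      apply Nat.mul_le_mul_left
      nlinarith
    rw [pow_succ]
    nlinarith

/-- With `p` prime, `v = padicValNat p`, `r` a positive integer with `p > r+1`,
`δ = δ(r,k)` the greatest `N ≥ 0` with `r·v(k+1) + N ≤ r·v(k+N+1)`, and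
`μ_r = (p−1)/(p−r−1)`, one has `k + δ ≤ μ_r · k`. -/
theorem stmt1 (p r k δ : ℕ) (hp : p.Prime) (hr : 0 < r) (hpr : r + 1 < p)
    (hδ : r * padicValNat p (k + 1) + δ ≤ r * padicValNat p (k + δ + 1))
    (hδmax : ∀ N : ℕ, r * padicValNat p (k + 1) + N ≤ r * padicValNat p (k + N + 1) → N ≤ δ) :
    (k : ℝ) + δ ≤ ((p : ℝ) - 1) / ((p : ℝ) - r - 1) * k := by
  set m := padicValNat p (k + δ + 1) with hm
  have h1 : δ ≤ r * m := le_trans (Nat.le_add_left _ _) hδ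
  have h2 : p ^ m ≤ k + δ + 1 := by
    apply Nat.le_of_dvd (by omega)
    exact pow_padicValNat_dvd
  have h3 : m * p + 1 ≤ p ^ m + m := aux_pow_lb p hp.two_le m
  -- cast to ℝ
  have h1R : (δ : ℝ) ≤ r * m := by exact_mod_cast h1
  have h2R : (p : ℝ) ^ m ≤ k + δ + 1 := by exact_mod_cast h2
  have h3R : (m : ℝ) * p + 1 ≤ (p : ℝ) ^ m + m := by exact_mod_cast h3
  have hprR : (r : ℝ) + 1 < p := by exact_mod_cast hpr
  have hrR : (1 : ℝ) ≤ r := by exact_mod_cast hr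
  have hden : (0 : ℝ) < (p : ℝ) - r - 1 := by linarith
  rw [div_mul_eq_mul_div, le_div_iff₀ hden]
  have hA : (0 : ℝ) ≤ ((r : ℝ) * m - δ) * ((p : ℝ) - 1) :=
    mul_nonneg (by linarith) (by linarith)
  have hB : (r : ℝ) * ((m : ℝ) * p + 1) ≤ r * ((p : ℝ) ^ m + m) :=
    mul_le_mul_of_nonneg_left h3R (by linarith)
  have hC : (r : ℝ) * ((p : ℝ) ^ m) ≤ r * ((k : ℝ) + δ + 1) :=
    mul_le_mul_of_nonneg_left h2R (by linarith)
  nlinarith [hA, hB, hC]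
end

section
/- Let K be a field with a valuation v, and let f(t) = Σ_{n≥1} a_n t^n ∈ K[[t]] be a power series with no constant term such that f'(t) has coefficients of nonnegative valuation (i.e., n·a_n has v(n·a_n) ≥ 0 for all n ≥ 1), and suppose k ≥ 1 is such that v(k·a_k) = 0. Let r > 0 be a real number. If u > k + δ(1/r, k−1) then for every w > r, v(a_u) + u·w > v(a_k) + k·w; in particular the point (u, v(a_u)) is not a vertex of the lower Newton polygon of f at slope parameter w. -/
/-- Let `f(t) = Σ_{n≥1} aₙ tⁿ` be a power series over the `p`-adic valued
field `ℚ_p` with no constant term, such that `f'` has coefficients of nonnegative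
valuation (`v(n·aₙ) ≥ 0` for `n ≥ 1`), and `k ≥ 1` with `v(k·a_k) = 0`.  Let `r > 0`
and let `δ = δ(1/r, k−1)` be the greatest `N ≥ 0` with `(1/r)·v(k) + N ≤ (1/r)·v(k+N)`
(where `v` on integers is the `p`-adic valuation).  If `u > k + δ` and `a_u ≠ 0`, then
for every `w > r` we have `v(a_u) + u·w > v(a_k) + k·w`; in particular `(u, v(a_u))`
is not in `vrt_w(f)`. -/
theorem stmt8 (p : ℕ) [Fact p.Prime] (a : ℕ → ℚ_[p]) (k : ℕ) (hk : 1 ≤ k)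
    (ha : ∀ n : ℕ, 1 ≤ n → a n ≠ 0 → 0 ≤ ((n : ℚ_[p]) * a n).valuation)
    (hak : a k ≠ 0) (hvk : ((k : ℚ_[p]) * a k).valuation = 0)
    (r : ℝ) (hr : 0 < r) (δ : ℕ)
    (hδ : (1 / r) * (padicValNat p k : ℝ) + (δ : ℝ)
        ≤ (1 / r) * (padicValNat p (k + δ) : ℝ))
    (hδmax : ∀ N : ℕ, (1 / r) * (padicValNat p k : ℝ) + (N : ℝ)
        ≤ (1 / r) * (padicValNat p (k + N) : ℝ) → N ≤ δ)
    (u : ℕ) (hu : k + δ < u) (hau : a u ≠ 0) :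
    ∀ w : ℝ, r < w →
      ((a k).valuation : ℝ) + (k : ℝ) * w < ((a u).valuation : ℝ) + (u : ℝ) * w := by
  intro w hw
  have hu1 : 1 ≤ u := le_trans hk (le_trans (Nat.le_add_right k δ) (le_of_lt hu))
  have hkne : (k : ℚ_[p]) ≠ 0 := Nat.cast_ne_zero.mpr (by omega)
  have hune : (u : ℚ_[p]) ≠ 0 := Nat.cast_ne_zero.mpr (by omega)
  have hvkmul : ((k : ℚ_[p]) * a k).valuation
      = (padicValNat p k : ℤ) + (a k).valuation := by
    rw [Padic.valuation_mul hkne hak, Padic.valuation_natCast]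
  have hvumul : ((u : ℚ_[p]) * a u).valuation
      = (padicValNat p u : ℤ) + (a u).valuation := by
    rw [Padic.valuation_mul hune hau, Padic.valuation_natCast]
  have hak' : ((a k).valuation : ℝ) = -(padicValNat p k : ℝ) := by
    have := hvk
    rw [hvkmul] at this
    have : (a k).valuation = -(padicValNat p k : ℤ) := by omega
    rw [this, Int.cast_neg, Int.cast_natCast]
  have hau' : -(padicValNat p u : ℝ) ≤ ((a u).valuation : ℝ) := by
    have h := ha u hu1 hau
    rw [hvumul] at h
    have : -(padicValNat p u : ℤ) ≤ (a u).valuation := by omega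
    exact_mod_cast this
  -- key: v_p(u) ≤ v_p(k) + (u - k) * r
  have hkey : (padicValNat p u : ℝ) ≤ (padicValNat p k : ℝ) + ((u : ℝ) - k) * r := by
    by_contra h
    push_neg at h
    have hN : k + (u - k) = u := by omega
    have : (1 / r) * (padicValNat p k : ℝ) + ((u - k : ℕ) : ℝ)
        ≤ (1 / r) * (padicValNat p (k + (u - k)) : ℝ) := by
      rw [hN]
      have hcast : ((u - k : ℕ) : ℝ) = (u : ℝ) - k := by
        push_cast [Nat.cast_sub (by omega : k ≤ u)]; ring
      rw [hcast]
      rw [div_mul_eq_mul_div, div_mul_eq_mul_div, one_mul, one_mul,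
        le_div_iff₀ hr, add_mul, div_mul_cancel₀ _ (ne_of_gt hr)]
      linarith
    have := hδmax _ this
    omega
  have hlt : (padicValNat p u : ℝ) - (padicValNat p k : ℝ) < ((u : ℝ) - k) * w := by
    have huk : (1 : ℝ) ≤ (u : ℝ) - k := by
      have : k + 1 ≤ u := by omega
      have := (Nat.cast_le (α := ℝ)).mpr this
      push_cast at this ⊢; linarith
    nlinarith
  calc ((a k).valuation : ℝ) + (k : ℝ) * w
      = -(padicValNat p k : ℝ) + (k : ℝ) * w := by rw [hak']
    _ < -(padicValNat p u : ℝ) + (u : ℝ) * w := by linarith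
    _ ≤ ((a u).valuation : ℝ) + (u : ℝ) * w := by linarith
end
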